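/- Let p_{XY} and q_{XY} be two joint pmfs on a finite set 𝒳 × 𝒴 and set Θ := ‖p_{XY} − q_{XY}‖_TV. If 0 < Θ ≤ 1/(2e), then |H_p(Y|X) − H_q(Y|X)| ≤ −5Θ·log₂(4Θ/|𝒴|). -/

import Mathlib

open Real

open Finset

set_option maxHeartbeats 1000000

/-- Log-sum / Jensen inequality for `logb 2`. -/
lemma logsum_aux {ι : Type*} [Fintype ι] (u c : ι → ℝ)
    (hu : ∀ i, 0 ≤ u i) (hc : ∀ i, 0 ≤ c i) (h0 : ∀ i, c i = 0 → u i = 0) :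
    ∑ i, u i * Real.logb 2 (c i / u i) ≤
      (∑ i, u i) * Real.logb 2 ((∑ i, c i) / (∑ i, u i)) := by
  have hU : 0 ≤ ∑ i, u i := Finset.sum_nonneg fun i _ => hu i
  rcases eq_or_lt_of_le hU with hU0 | hUpos
  · have hz : ∀ i ∈ Finset.univ, u i = 0 :=
      (Finset.sum_eq_zero_iff_of_nonneg (fun i _ => hu i)).mp hU0.symm
    rw [← hU0]
    simp only [zero_mul]
    exact le_of_eq (Finset.sum_eq_zero fun i hi => by rw [hz i hi, zero_mul])
  · obtain ⟨i0, -, hi0⟩ : ∃ i ∈ Finset.univ, 0 < u i := by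
      by_contra h
      push_neg at h
      have : ∑ i, u i = 0 := Finset.sum_eq_zero fun i hi => le_antisymm (h i hi) (hu i)
      linarith
    have hc0 : 0 < c i0 := by
      rcases eq_or_lt_of_le (hc i0) with h | h
      · exact absurd (h0 i0 h.symm) (by linarith)
      · exact h
    have hC : 0 < ∑ i, c i :=
      lt_of_lt_of_le hc0 (Finset.single_le_sum (fun i _ => hc i) (Finset.mem_univ i0))
    set U := ∑ i, u i
    set C := ∑ i, c i
    have hL2 : 0 < Real.log 2 := Real.log_pos one_lt_two
    have key : ∀ i, u i * Real.logb 2 (c i / u i) - u i * Real.logb 2 (C / U) ≤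
        (c i * U / C - u i) / Real.log 2 := by
      intro i
      rcases eq_or_lt_of_le (hu i) with h | h
      · rw [← h]
        simp only [zero_mul, sub_zero, zero_sub, neg_zero, sub_self]
        have := hc i
        positivity
      · have hci : 0 < c i := by
          rcases eq_or_lt_of_le (hc i) with h' | h'
          · exact absurd (h0 i h'.symm) (by linarith)
          · exact h'
        have e1 : Real.logb 2 (c i / u i) - Real.logb 2 (C / U) =
            Real.log (c i * U / (u i * C)) / Real.log 2 := by
          rw [Real.logb, Real.logb, div_sub_div_same,
            Real.log_div (by positivity) (by positivity),
            Real.log_div (by positivity) (by positivity),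
            Real.log_div (by positivity) (by positivity),
            Real.log_mul (by positivity) (by positivity),
            Real.log_mul (by positivity) (by positivity)]
          ring
        have e2 : Real.log (c i * U / (u i * C)) ≤ c i * U / (u i * C) - 1 :=
          Real.log_le_sub_one_of_pos (by positivity)
        have := mul_le_mul_of_nonneg_left e2 h.le
        calc u i * Real.logb 2 (c i / u i) - u i * Real.logb 2 (C / U)
            = u i * (Real.log (c i * U / (u i * C)) / Real.log 2) := by rw [← e1]; ring
          _ ≤ u i * ((c i * U / (u i * C) - 1) / Real.log 2) := by
              apply mul_le_mul_of_nonneg_left _ h.le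
              exact (div_le_div_iff_of_pos_right hL2).mpr e2
          _ = (c i * U / C - u i) / Real.log 2 := by field_simp
    have hsum := Finset.sum_le_sum (fun i (_ : i ∈ Finset.univ) => key i)
    rw [Finset.sum_sub_distrib, ← Finset.sum_mul] at hsum
    have : ∑ i, (c i * U / C - u i) / Real.log 2 = 0 := by
      rw [← Finset.sum_div, Finset.sum_sub_distrib, ← Finset.sum_div, ← Finset.sum_mul]
      field_simp
      show (∑ i, c i) * (∑ i, u i) - (∑ i, c i) * ∑ x, u x = (∑ i, c i) * Real.log 2 * 0
      ring
    rw [this] at hsum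
    linarith

/-- Conditional Shannon entropy (base 2) `H_p(Y|X)` of a joint pmf `p` on `𝒳 × 𝒴`:
`H_p(Y|X) = −∑_{x,y} p(x,y)·log₂(p(x,y)/p_X(x))` (terms with `p(x,y)=0` vanish,
since `0 · log₂(anything) = 0` and `log₂ 0 = 0` by convention in Mathlib). -/
noncomputable def condEntropy2 {𝒳 𝒴 : Type*} [Fintype 𝒳] [Fintype 𝒴]
    (p : 𝒳 × 𝒴 → ℝ) : ℝ :=
  -∑ x, ∑ y, p (x, y) * Real.logb 2 (p (x, y) / ∑ y', p (x, y'))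

lemma condEntropy2_flip {𝒳 𝒴 : Type*} [Fintype 𝒳] [Fintype 𝒴] (p : 𝒳 × 𝒴 → ℝ) :
    condEntropy2 p =
      ∑ x, ∑ y, p (x, y) * Real.logb 2 ((∑ y', p (x, y')) / p (x, y)) := by
  unfold condEntropy2
  have h : ∀ (x : 𝒳) (y : 𝒴), p (x, y) * Real.logb 2 ((∑ y', p (x, y')) / p (x, y)) =
      -(p (x, y) * Real.logb 2 (p (x, y) / ∑ y', p (x, y'))) := by
    intro x y
    rw [← inv_div (∑ y', p (x, y')) (p (x, y)), Real.logb_inv]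
    ring
  simp only [h, Finset.sum_neg_distrib]

lemma one_sided {𝒳 𝒴 : Type*} [Fintype 𝒳] [Fintype 𝒴]
    (p q : 𝒳 × 𝒴 → ℝ)
    (hp0 : ∀ w, 0 ≤ p w) (hp1 : ∑ w, p w = 1)
    (hq0 : ∀ w, 0 ≤ q w) (hq1 : ∑ w, q w = 1)
    (θ : ℝ) (hθ : ∑ w, |p w - q w| = 2 * θ) (hθpos : 0 < θ) :
    condEntropy2 p - condEntropy2 q ≤
      Real.logb 2 (1 + θ) + θ * Real.logb 2 ((Fintype.card 𝒴 : ℝ) * (1 + θ) / θ) := by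
  classical
  set m : 𝒳 × 𝒴 → ℝ := fun w => max (p w) (q w) with hm_def
  set r : 𝒳 × 𝒴 → ℝ := fun w => m w - q w with hr_def
  set Mx : 𝒳 → ℝ := fun x => ∑ y, m (x, y) with hMx_def
  set pX : 𝒳 → ℝ := fun x => ∑ y, p (x, y) with hpX_def
  set qX : 𝒳 → ℝ := fun x => ∑ y, q (x, y) with hqX_def
  have hm0 : ∀ w, 0 ≤ m w := fun w => le_trans (hp0 w) (le_max_left _ _)
  have hpm : ∀ w, p w ≤ m w := fun w => le_max_left _ _
  have hqm : ∀ w, q w ≤ m w := fun w => le_max_right _ _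
  have hr0 : ∀ w, 0 ≤ r w := fun w => by simp only [hr_def]; linarith [hqm w]
  have hrm : ∀ w, r w ≤ m w := fun w => by simp only [hr_def]; linarith [hq0 w]
  have hqr : ∀ w, q w + r w = m w := fun w => by simp only [hr_def]; ring
  have hMx0 : ∀ x, 0 ≤ Mx x := fun x => Finset.sum_nonneg fun y _ => hm0 (x, y)
  have hmMx : ∀ x y, m (x, y) ≤ Mx x := fun x y =>
    Finset.single_le_sum (fun y _ => hm0 (x, y)) (Finset.mem_univ y)
  have hpX0 : ∀ x, 0 ≤ pX x := fun x => Finset.sum_nonneg fun y _ => hp0 (x, y)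
  have hqX0 : ∀ x, 0 ≤ qX x := fun x => Finset.sum_nonneg fun y _ => hq0 (x, y)
  have hpXMx : ∀ x, pX x ≤ Mx x := fun x => Finset.sum_le_sum fun y _ => hpm (x, y)
  have hqXMx : ∀ x, qX x ≤ Mx x := fun x => Finset.sum_le_sum fun y _ => hqm (x, y)
  have hqqX : ∀ x y, q (x, y) ≤ qX x := fun x y =>
    Finset.single_le_sum (fun y _ => hq0 (x, y)) (Finset.mem_univ y)
  have hMxzero : ∀ x, Mx x = 0 → ∀ y, m (x, y) = 0 := by
    intro x hx y
    exact (Finset.sum_eq_zero_iff_of_nonneg (fun y _ => hm0 (x, y))).mp hx y (Finset.mem_univ y)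
  -- total mass of r is θ
  have hR : ∑ w, r w = θ := by
    have h1 : ∀ w, r w = ((p w - q w) + |p w - q w|) / 2 := by
      intro w
      rcases le_total (p w) (q w) with h | h
      · simp only [hr_def, hm_def, max_eq_right h, abs_of_nonpos (by linarith : p w - q w ≤ 0)]
        ring
      · simp only [hr_def, hm_def, max_eq_left h, abs_of_nonneg (by linarith : 0 ≤ p w - q w)]
        ring
    rw [Finset.sum_congr rfl fun w _ => h1 w, ← Finset.sum_div, Finset.sum_add_distrib,
      Finset.sum_sub_distrib, hp1, hq1, hθ]
    ring
  -- total mass of m is 1 + θ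
  have hM : ∑ x, Mx x = 1 + θ := by
    have : ∑ x, Mx x = ∑ w, m w := (Fintype.sum_prod_type _).symm
    rw [this, ← Finset.sum_congr rfl fun w _ => (hqr w), Finset.sum_add_distrib, hq1, hR]
  -- Step 1 : per x
  have step1 : ∀ x, ∑ y, p (x, y) * Real.logb 2 (pX x / p (x, y)) ≤
      ∑ y, p (x, y) * Real.logb 2 (Mx x / m (x, y)) := by
    intro x
    by_cases hx : pX x = 0
    · have hz : ∀ y, p (x, y) = 0 := fun y =>
        (Finset.sum_eq_zero_iff_of_nonneg (fun y _ => hp0 (x, y))).mp hx y (Finset.mem_univ y)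
      simp [hz]
    · have hx' : 0 < pX x := lt_of_le_of_ne (hpX0 x) (Ne.symm hx)
      have hMx' : 0 < Mx x := lt_of_lt_of_le hx' (hpXMx x)
      have hcore := logsum_aux (fun y => p (x, y)) (fun y => pX x * m (x, y) / Mx x)
        (fun y => hp0 (x, y)) (fun y => by
          have h1 := hpX0 x; have h2 := hm0 (x, y); have h3 := hMx0 x; positivity)
        (fun y hy => by
          have hmy : m (x, y) = 0 := by
            by_contra hmy
            have : 0 < m (x, y) := lt_of_le_of_ne (hm0 (x, y)) (Ne.symm hmy)
            have : 0 < pX x * m (x, y) / Mx x := by positivity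
            linarith [hy ▸ this]
          have := hpm (x, y)
          have := hp0 (x, y)
          linarith [hmy ▸ this])
      have hsc : ∑ y, pX x * m (x, y) / Mx x = pX x := by
        rw [← Finset.sum_div, ← Finset.mul_sum]
        show pX x * Mx x / Mx x = pX x
        field_simp
      rw [hsc] at hcore
      have hpXsum : ∑ y, p (x, y) = pX x := rfl
      rw [hpXsum, div_self hx, Real.logb_one, mul_zero] at hcore
      have hid : ∀ y, p (x, y) * Real.logb 2 (pX x / p (x, y)) =
          p (x, y) * Real.logb 2 ((pX x * m (x, y) / Mx x) / p (x, y)) +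
          p (x, y) * Real.logb 2 (Mx x / m (x, y)) := by
        intro y
        rcases eq_or_lt_of_le (hp0 (x, y)) with h0 | h0
        · rw [← h0]; ring
        · have hmy : 0 < m (x, y) := lt_of_lt_of_le h0 (hpm (x, y))
          rw [← mul_add]
          congr 1
          rw [← Real.logb_mul (by positivity) (by positivity)]
          congr 1
          field_simp
      calc ∑ y, p (x, y) * Real.logb 2 (pX x / p (x, y))
          = (∑ y, p (x, y) * Real.logb 2 ((pX x * m (x, y) / Mx x) / p (x, y))) +
            ∑ y, p (x, y) * Real.logb 2 (Mx x / m (x, y)) := by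
            rw [← Finset.sum_add_distrib]
            exact Finset.sum_congr rfl fun y _ => hid y
        _ ≤ 0 + ∑ y, p (x, y) * Real.logb 2 (Mx x / m (x, y)) := by
            exact add_le_add hcore le_rfl
        _ = _ := zero_add _
  -- Step 2 : termwise
  have step2 : ∀ x y, p (x, y) * Real.logb 2 (Mx x / m (x, y)) ≤
      q (x, y) * Real.logb 2 (Mx x / q (x, y)) +
      r (x, y) * Real.logb 2 (Mx x / r (x, y)) := by
    intro x y
    rcases eq_or_lt_of_le (hm0 (x, y)) with h0 | h0
    · have hp' : p (x, y) = 0 := le_antisymm (h0 ▸ hpm (x, y)) (hp0 (x, y))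
      have hq' : q (x, y) = 0 := le_antisymm (h0 ▸ hqm (x, y)) (hq0 (x, y))
      have hr' : r (x, y) = 0 := le_antisymm (h0 ▸ hrm (x, y)) (hr0 (x, y))
      simp [hp', hq', hr']
    · have hMx' : 0 < Mx x := lt_of_lt_of_le h0 (hmMx x y)
      have hL : 0 ≤ Real.logb 2 (Mx x / m (x, y)) :=
        Real.logb_nonneg one_lt_two ((one_le_div h0).mpr (hmMx x y))
      have e1 : p (x, y) * Real.logb 2 (Mx x / m (x, y)) ≤
          (q (x, y) + r (x, y)) * Real.logb 2 (Mx x / m (x, y)) :=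
        mul_le_mul_of_nonneg_right (by linarith [hpm (x, y), hqr (x, y)]) hL
      have e2 : q (x, y) * Real.logb 2 (Mx x / m (x, y)) ≤
          q (x, y) * Real.logb 2 (Mx x / q (x, y)) := by
        rcases eq_or_lt_of_le (hq0 (x, y)) with hq' | hq'
        · rw [← hq']; simp
        · apply mul_le_mul_of_nonneg_left _ hq'.le
          apply Real.logb_le_logb_of_le one_lt_two (by positivity)
          exact (div_le_div_iff_of_pos_left hMx' h0 hq').mpr (hqm (x, y))
      have e3 : r (x, y) * Real.logb 2 (Mx x / m (x, y)) ≤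
          r (x, y) * Real.logb 2 (Mx x / r (x, y)) := by
        rcases eq_or_lt_of_le (hr0 (x, y)) with hr' | hr'
        · rw [← hr']; simp
        · apply mul_le_mul_of_nonneg_left _ hr'.le
          apply Real.logb_le_logb_of_le one_lt_two (by positivity)
          exact (div_le_div_iff_of_pos_left hMx' h0 hr').mpr (hrm (x, y))
      calc p (x, y) * Real.logb 2 (Mx x / m (x, y))
          ≤ (q (x, y) + r (x, y)) * Real.logb 2 (Mx x / m (x, y)) := e1
        _ = q (x, y) * Real.logb 2 (Mx x / m (x, y)) +
            r (x, y) * Real.logb 2 (Mx x / m (x, y)) := by ring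
        _ ≤ _ := add_le_add e2 e3
  -- Step 3 : termwise split of the q part
  have step3 : ∀ x y, q (x, y) * Real.logb 2 (Mx x / q (x, y)) =
      q (x, y) * Real.logb 2 (qX x / q (x, y)) +
      q (x, y) * Real.logb 2 (Mx x / qX x) := by
    intro x y
    rcases eq_or_lt_of_le (hq0 (x, y)) with h0 | h0
    · rw [← h0]; ring
    · have hqX' : 0 < qX x := lt_of_lt_of_le h0 (hqqX x y)
      have hMx' : 0 < Mx x := lt_of_lt_of_le hqX' (hqXMx x)
      rw [← mul_add]
      congr 1
      rw [← Real.logb_mul (by positivity) (by positivity)]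
      congr 1
      field_simp
  -- step 4 : marginal part
  have step4 : ∑ x, qX x * Real.logb 2 (Mx x / qX x) ≤ Real.logb 2 (1 + θ) := by
    have hqX1 : ∑ x, qX x = 1 := by
      rw [hqX_def, ← Fintype.sum_prod_type, hq1]
    have := logsum_aux qX Mx hqX0 hMx0 (fun x hx => by
      have hz := hMxzero x hx
      apply le_antisymm _ (hqX0 x)
      calc qX x ≤ Mx x := hqXMx x
        _ = 0 := hx)
    rw [hqX1, hM, one_mul, div_one] at this
    exact this
  -- step 5 : the r part
  have step5 : ∑ x, ∑ y, r (x, y) * Real.logb 2 (Mx x / r (x, y)) ≤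
      θ * Real.logb 2 ((Fintype.card 𝒴 : ℝ) * (1 + θ) / θ) := by
    have hsum : ∑ x, ∑ y, r (x, y) * Real.logb 2 (Mx x / r (x, y)) =
        ∑ w : 𝒳 × 𝒴, r w * Real.logb 2 (Mx w.1 / r w) :=
      (Fintype.sum_prod_type (fun w : 𝒳 × 𝒴 => r w * Real.logb 2 (Mx w.1 / r w))).symm
    have hc : ∑ w : 𝒳 × 𝒴, Mx w.1 = (Fintype.card 𝒴 : ℝ) * (1 + θ) := by
      rw [Fintype.sum_prod_type]
      simp only [Finset.sum_const, Finset.card_univ, nsmul_eq_mul]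
      rw [← Finset.mul_sum, hM]
    have := logsum_aux r (fun w => Mx w.1) hr0 (fun w => hMx0 w.1) (fun w hw => by
      have hz : m (w.1, w.2) = 0 := hMxzero w.1 hw w.2
      have h1 : r w ≤ m (w.1, w.2) := hrm w
      have h2 := hr0 w
      linarith)
    rw [hR, hc] at this
    rw [hsum]
    exact this
  -- assemble
  have hq_flip := condEntropy2_flip q
  have hp_flip := condEntropy2_flip p
  have main : condEntropy2 p ≤ condEntropy2 q + Real.logb 2 (1 + θ) +
      θ * Real.logb 2 ((Fintype.card 𝒴 : ℝ) * (1 + θ) / θ) := by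
    calc condEntropy2 p = ∑ x, ∑ y, p (x, y) * Real.logb 2 (pX x / p (x, y)) := hp_flip
      _ ≤ ∑ x, ∑ y, p (x, y) * Real.logb 2 (Mx x / m (x, y)) :=
          Finset.sum_le_sum fun x _ => step1 x
      _ ≤ ∑ x, ∑ y, (q (x, y) * Real.logb 2 (Mx x / q (x, y)) +
            r (x, y) * Real.logb 2 (Mx x / r (x, y))) :=
          Finset.sum_le_sum fun x _ => Finset.sum_le_sum fun y _ => step2 x y
      _ = ∑ x, ∑ y, q (x, y) * Real.logb 2 (Mx x / q (x, y)) +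
          ∑ x, ∑ y, r (x, y) * Real.logb 2 (Mx x / r (x, y)) := by
          rw [← Finset.sum_add_distrib]
          exact Finset.sum_congr rfl fun x _ => Finset.sum_add_distrib
      _ = (∑ x, ∑ y, q (x, y) * Real.logb 2 (qX x / q (x, y)) +
           ∑ x, qX x * Real.logb 2 (Mx x / qX x)) +
          ∑ x, ∑ y, r (x, y) * Real.logb 2 (Mx x / r (x, y)) := by
          congr 1
          rw [← Finset.sum_add_distrib]
          apply Finset.sum_congr rfl
          intro x _
          calc ∑ y, q (x, y) * Real.logb 2 (Mx x / q (x, y))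
              = ∑ y, (q (x, y) * Real.logb 2 (qX x / q (x, y)) +
                  q (x, y) * Real.logb 2 (Mx x / qX x)) :=
                Finset.sum_congr rfl fun y _ => step3 x y
            _ = (∑ y, q (x, y) * Real.logb 2 (qX x / q (x, y))) +
                ∑ y, q (x, y) * Real.logb 2 (Mx x / qX x) := Finset.sum_add_distrib
            _ = (∑ y, q (x, y) * Real.logb 2 (qX x / q (x, y))) +
                qX x * Real.logb 2 (Mx x / qX x) := by rw [← Finset.sum_mul]
      _ ≤ condEntropy2 q + Real.logb 2 (1 + θ) +
          θ * Real.logb 2 ((Fintype.card 𝒴 : ℝ) * (1 + θ) / θ) := by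
          rw [hq_flip]
          linarith [step4, step5]
  linarith

lemma numeric_aux (θ d : ℝ) (hθ : 0 < θ) (hθ' : θ ≤ 1 / (2 * Real.exp 1)) (hd : 2 ≤ d) :
    Real.logb 2 (1 + θ) + θ * Real.logb 2 (d * (1 + θ) / θ) ≤
      -5 * θ * Real.logb 2 (4 * θ / d) := by
  have hL2 : 0 < Real.log 2 := Real.log_pos one_lt_two
  have hd0 : (0:ℝ) < d := by linarith
  have he : (2.7182818283 : ℝ) < Real.exp 1 := Real.exp_one_gt_d9
  have hθu : θ ≤ 0.184 := by
    have h1 : 1 / (2 * Real.exp 1) ≤ 0.184 := by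
      rw [div_le_iff₀ (by positivity)]
      nlinarith
    linarith
  have hX0 : 0 ≤ Real.log (1 + θ) := Real.log_nonneg (by linarith)
  have hX : Real.log (1 + θ) ≤ θ := by
    have := Real.log_le_sub_one_of_pos (show (0:ℝ) < 1 + θ by linarith)
    linarith
  have hT : Real.log θ ≤ -(Real.log 2 + 1) := by
    have h1 : Real.log θ ≤ Real.log (1 / (2 * Real.exp 1)) :=
      (Real.log_le_log_iff hθ (by positivity)).mpr hθ'
    have h2 : Real.log (1 / (2 * Real.exp 1)) = -(Real.log 2 + 1) := by
      rw [one_div, Real.log_inv, Real.log_mul (by norm_num) (Real.exp_ne_zero 1), Real.log_exp]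
    linarith
  have hD : Real.log 2 ≤ Real.log d := (Real.log_le_log_iff two_pos hd0).mpr hd
  have hLb : Real.log 2 < 0.6931472 := lt_trans Real.log_two_lt_d9 (by norm_num)
  have hA : Real.log (d * (1 + θ) / θ) = Real.log d + Real.log (1 + θ) - Real.log θ := by
    rw [Real.log_div (by positivity) hθ.ne', Real.log_mul hd0.ne' (by positivity)]
  have hB : Real.log (4 * θ / d) = 2 * Real.log 2 + Real.log θ - Real.log d := by
    rw [Real.log_div (by positivity) hd0.ne', Real.log_mul (by norm_num) hθ.ne',
      show (4:ℝ) = 2 ^ 2 by norm_num, Real.log_pow]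
    push_cast
    ring
  have key : Real.log (1 + θ) + θ * Real.log (d * (1 + θ) / θ) ≤
      -5 * θ * Real.log (4 * θ / d) := by
    rw [hA, hB]
    nlinarith [mul_le_mul_of_nonneg_left hX hθ.le, mul_le_mul_of_nonneg_left hT hθ.le,
      mul_le_mul_of_nonneg_left hD hθ.le, mul_le_mul_of_nonneg_right hθu hθ.le,
      mul_le_mul_of_nonneg_left hLb.le hθ.le]
  simp only [Real.logb]
  have e1 : Real.log (1 + θ) / Real.log 2 + θ * (Real.log (d * (1 + θ) / θ) / Real.log 2)
      = (Real.log (1 + θ) + θ * Real.log (d * (1 + θ) / θ)) / Real.log 2 := by ring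
  have e2 : -5 * θ * (Real.log (4 * θ / d) / Real.log 2)
      = (-5 * θ * Real.log (4 * θ / d)) / Real.log 2 := by ring
  rw [e1, e2]
  exact (div_le_div_iff_of_pos_right hL2).mpr key

lemma condEntropy2_zero_of_card_one {𝒳 𝒴 : Type*} [Fintype 𝒳] [Fintype 𝒴]
    (f : 𝒳 × 𝒴 → ℝ) (h1 : Fintype.card 𝒴 = 1) : condEntropy2 f = 0 := by
  obtain ⟨y0, hy0⟩ := Fintype.card_eq_one_iff.mp h1
  unfold condEntropy2
  rw [neg_eq_zero]
  apply Finset.sum_eq_zero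
  intro x _
  have hsum : ∀ g : 𝒴 → ℝ, ∑ y, g y = g y0 := fun g =>
    Finset.sum_eq_single_of_mem y0 (Finset.mem_univ _) (fun b _ hb => absurd (hy0 b) hb)
  rw [hsum]
  rw [hsum (fun y' => f (x, y'))]
  rcases eq_or_ne (f (x, y0)) 0 with h | h
  · rw [h]; ring
  · rw [div_self h, Real.logb_one, mul_zero]

/-- For joint pmfs `p, q` on finite `𝒳 × 𝒴` with
`Θ := ‖p − q‖_TV` satisfying `0 < Θ ≤ 1/(2e)`:
`|H_p(Y|X) − H_q(Y|X)| ≤ −5Θ·log₂(4Θ/|𝒴|)`. -/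
theorem stmt_2 {𝒳 𝒴 : Type*} [Fintype 𝒳] [Fintype 𝒴]
    (p q : 𝒳 × 𝒴 → ℝ)
    (hp0 : ∀ w, 0 ≤ p w) (hp1 : ∑ w, p w = 1)
    (hq0 : ∀ w, 0 ≤ q w) (hq1 : ∑ w, q w = 1)
    (Θ : ℝ) (hΘdef : Θ = (1 / 2) * ∑ w, |p w - q w|)
    (hΘpos : 0 < Θ) (hΘle : Θ ≤ 1 / (2 * Real.exp 1)) :
    |condEntropy2 p - condEntropy2 q| ≤
      -5 * Θ * Real.logb 2 (4 * Θ / (Fintype.card 𝒴 : ℝ)) := by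
  have he : (2.7182818283 : ℝ) < Real.exp 1 := Real.exp_one_gt_d9
  have hΘu : Θ ≤ 0.184 := by
    have h1 : 1 / (2 * Real.exp 1) ≤ 0.184 := by
      rw [div_le_iff₀ (by positivity)]
      nlinarith
    linarith
  -- 𝒴 is nonempty
  rcases isEmpty_or_nonempty 𝒴 with h𝒴 | h𝒴
  · exfalso
    haveI : IsEmpty (𝒳 × 𝒴) := Prod.isEmpty_right
    simp only [Finset.univ_eq_empty, Finset.sum_empty] at hp1
    exact zero_ne_one hp1
  have hcard1 : 1 ≤ Fintype.card 𝒴 := Fintype.card_pos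
  rcases eq_or_lt_of_le hcard1 with hone | htwo
  · -- card 𝒴 = 1 : both entropies vanish
    have h1 : Fintype.card 𝒴 = 1 := hone.symm
    rw [condEntropy2_zero_of_card_one p h1, condEntropy2_zero_of_card_one q h1,
      sub_zero, abs_zero, h1]
    have h4 : Real.logb 2 (4 * Θ / ((1:ℕ) : ℝ)) ≤ 0 := by
      apply Real.logb_nonpos one_lt_two (by positivity)
      push_cast
      rw [div_one]
      nlinarith
    nlinarith
  · -- card 𝒴 ≥ 2
    have hd : (2:ℝ) ≤ (Fintype.card 𝒴 : ℝ) := by exact_mod_cast htwo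
    have hθ : ∑ w, |p w - q w| = 2 * Θ := by linarith [hΘdef]
    have hθ' : ∑ w, |q w - p w| = 2 * Θ := by
      rw [Finset.sum_congr rfl fun w _ => abs_sub_comm (q w) (p w)]
      exact hθ
    rw [abs_sub_le_iff]
    constructor
    · exact le_trans (one_sided p q hp0 hp1 hq0 hq1 Θ hθ hΘpos)
        (numeric_aux Θ _ hΘpos hΘle hd)
    · exact le_trans (one_sided q p hq0 hq1 hp0 hp1 Θ hθ' hΘpos)
        (numeric_aux Θ _ hΘpos hΘle hd)
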